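/- If S = (1,2,2,2,2,2,…), then the S-packing chromatic number of G(ℤ,{2,3}) equals 6. -/

import Mathlib

def distG (t : ℤ) : SimpleGraph ℤ :=
  SimpleGraph.fromRel (fun i j => |i - j| = 2 ∨ |i - j| = t)

/-! ### Basic facts about the graph -/

lemma adj_iff (u v : ℤ) : (distG 3).Adj u v ↔ u ≠ v ∧ (|u - v| = 2 ∨ |u - v| = 3) := by
  constructor
  · rintro ⟨h, h2 | h2⟩
    · exact ⟨h, h2⟩
    · refine ⟨h, ?_⟩
      rwa [abs_sub_comm]
  · rintro ⟨h, h2⟩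
    exact ⟨h, Or.inl h2⟩

lemma adj_of_eq (u v : ℤ) (h : |u - v| = 2 ∨ |u - v| = 3) : (distG 3).Adj u v := by
  rw [adj_iff]
  refine ⟨?_, h⟩
  rintro rfl
  simp at h

/-- Along a walk, positions change by at most 3 per step. -/
lemma walk_bound : ∀ {u v : ℤ} (p : (distG 3).Walk u v), |u - v| ≤ 3 * p.length := by
  intro u v p
  induction p with
  | nil => simp
  | @cons a b c h p ih =>
    have hab : |a - b| ≤ 3 := by
      rcases (adj_iff a b).1 h with ⟨_, h2 | h2⟩ <;> omega
    calc |a - c| ≤ |a - b| + |b - c| := abs_sub_le a b c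
      _ ≤ 3 + 3 * p.length := by omega
      _ = 3 * (SimpleGraph.Walk.cons h p).length := by
          simp [SimpleGraph.Walk.length_cons]; ring

lemma reach_succ (u : ℤ) : (distG 3).Reachable u (u + 1) := by
  have h1 : (distG 3).Adj u (u + 3) := adj_of_eq _ _ (by right; rw [show u - (u+3) = -3 by ring]; norm_num)
  have h2 : (distG 3).Adj (u + 3) (u + 1) := adj_of_eq _ _ (by left; rw [show (u+3) - (u+1) = 2 by ring]; norm_num)
  exact (h1.reachable).trans h2.reachable

lemma reach_all (u v : ℤ) : (distG 3).Reachable u v := by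
  have key : ∀ (n : ℕ) (w : ℤ), (distG 3).Reachable w (w + n) := by
    intro n
    induction n with
    | zero =>
      intro w
      simp only [Nat.cast_zero, add_zero]
      exact SimpleGraph.Reachable.refl w
    | succ m ih =>
      intro w
      have := (ih w).trans (reach_succ (w + m))
      have he : (w + m) + 1 = w + (m + 1 : ℕ) := by push_cast; ring
      rwa [he] at this
  rcases le_total u v with h | h
  · obtain ⟨n, hn⟩ := Int.le.dest h
    have := key n u
    rwa [hn] at this
  · obtain ⟨n, hn⟩ := Int.le.dest h
    have := key n v
    rw [hn] at this
    exact this.symm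

/-- If two vertices are far apart, their graph distance exceeds 2. -/
lemma two_lt_dist {u v : ℤ} (h : 7 ≤ |u - v|) : 2 < (distG 3).dist u v := by
  obtain ⟨p, hp⟩ := (reach_all u v).exists_walk_length_eq_dist
  have hb := walk_bound p
  rw [hp] at hb
  by_contra hc
  push_neg at hc
  have : ((distG 3).dist u v : ℤ) ≤ 2 := by exact_mod_cast hc
  omega

/-- If two distinct vertices are within distance 6, their graph distance is at most 2. -/
lemma dist_le_two {u v : ℤ} (hne : u ≠ v) (h : |u - v| ≤ 6) : (distG 3).dist u v ≤ 2 := by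
  have step : ∀ (a b c : ℤ), (distG 3).Adj a b → (distG 3).Adj b c → (distG 3).dist a c ≤ 2 := by
    intro a b c hab hbc
    have : (distG 3).dist a c ≤ (SimpleGraph.Walk.cons hab (SimpleGraph.Walk.cons hbc SimpleGraph.Walk.nil)).length :=
      SimpleGraph.dist_le _
    simpa using this
  have step1 : ∀ (a b : ℤ), (distG 3).Adj a b → (distG 3).dist a b ≤ 2 := by
    intro a b hab
    have : (distG 3).dist a b ≤ (SimpleGraph.Walk.cons hab SimpleGraph.Walk.nil).length :=
      SimpleGraph.dist_le _
    simp at this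
    omega
  have main : ∀ (w : ℤ) (d : ℤ), 1 ≤ d → d ≤ 6 → (distG 3).dist w (w + d) ≤ 2 := by
    intro w d h1 h6
    interval_cases d
    · exact step w (w + 3) (w + 1)
        (adj_of_eq _ _ (by right; rw [show w - (w+3) = -3 by ring]; norm_num))
        (adj_of_eq _ _ (by left; rw [show (w+3) - (w+1) = 2 by ring]; norm_num))
    · exact step1 w (w + 2) (adj_of_eq _ _ (by left; rw [show w - (w+2) = -2 by ring]; norm_num))
    · exact step1 w (w + 3) (adj_of_eq _ _ (by right; rw [show w - (w+3) = -3 by ring]; norm_num))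
    · exact step w (w + 2) (w + 4)
        (adj_of_eq _ _ (by left; rw [show w - (w+2) = -2 by ring]; norm_num))
        (adj_of_eq _ _ (by left; rw [show (w+2) - (w+4) = -2 by ring]; norm_num))
    · exact step w (w + 2) (w + 5)
        (adj_of_eq _ _ (by left; rw [show w - (w+2) = -2 by ring]; norm_num))
        (adj_of_eq _ _ (by right; rw [show (w+2) - (w+5) = -3 by ring]; norm_num))
    · exact step w (w + 3) (w + 6)
        (adj_of_eq _ _ (by right; rw [show w - (w+3) = -3 by ring]; norm_num))
        (adj_of_eq _ _ (by right; rw [show (w+3) - (w+6) = -3 by ring]; norm_num))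
  rcases le_total u v with hle | hle
  · have h1 : 1 ≤ v - u := by omega
    have h6 : v - u ≤ 6 := by
      have : |u - v| = v - u := by rw [abs_sub_comm]; exact abs_of_nonneg (by omega)
      omega
    have := main u (v - u) h1 h6
    simpa using this
  · have h1 : 1 ≤ u - v := by omega
    have h6 : u - v ≤ 6 := by
      have : |u - v| = u - v := abs_of_nonneg (by omega)
      omega
    have := main v (u - v) h1 h6
    rw [SimpleGraph.dist_comm]
    simpa using this

/-! ### Upper bound: a valid coloring with 6 colors, period 25 -/

def pat : ZMod 25 → Fin 6 :=
  ![0,0,1,2,3,0,0,4,5,1,0,0,2,3,4,0,0,5,1,2,0,0,3,4,5]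

lemma pat_facts : ∀ x : ZMod 25,
    (pat x = 0 → pat (x + 2) ≠ 0 ∧ pat (x + 3) ≠ 0) ∧
    (pat x ≠ 0 → pat (x + 1) ≠ pat x ∧ pat (x + 2) ≠ pat x ∧ pat (x + 3) ≠ pat x ∧
      pat (x + 4) ≠ pat x ∧ pat (x + 5) ≠ pat x ∧ pat (x + 6) ≠ pat x) := by decide

def fU : ℤ → Fin 6 := fun z => pat (z : ZMod 25)

lemma fU_add (z : ℤ) (d : ℤ) : fU (z + d) = pat ((z : ZMod 25) + (d : ZMod 25)) := by
  unfold fU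
  congr 1
  push_cast
  ring

lemma fU_key (a d : ℤ) (h1 : 1 ≤ d) (h6 : d ≤ 6) (h0 : fU a ≠ 0) : fU a ≠ fU (a + d) := by
  intro hab
  have hd := (pat_facts (a : ZMod 25)).2 h0
  rw [fU_add a d] at hab
  interval_cases d <;> push_cast at hab <;>
    first
    | exact hd.1 hab.symm
    | exact hd.2.1 hab.symm
    | exact hd.2.2.1 hab.symm
    | exact hd.2.2.2.1 hab.symm
    | exact hd.2.2.2.2.1 hab.symm
    | exact hd.2.2.2.2.2 hab.symm

lemma fU_key0 (a d : ℤ) (hd2 : d = 2 ∨ d = 3) (ha0 : fU a = 0) : fU (a + d) ≠ 0 := by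
  have hd := (pat_facts (a : ZMod 25)).1 ha0
  rw [fU_add a d]
  rcases hd2 with rfl | rfl
  · push_cast
    exact hd.1
  · push_cast
    exact hd.2

/-! ### Lower bound: exhaustive search -/

def colStep (c p1 p2 p3 p4 p5 p6 : Fin 5) : Bool :=
  if c = 0 then p2 != 0 && p3 != 0
  else c != p1 && c != p2 && c != p3 && c != p4 && c != p5 && c != p6

def ext : ℕ → Fin 5 → Fin 5 → Fin 5 → Fin 5 → Fin 5 → Fin 5 → Bool
  | 0, _, _, _, _, _, _ => true
  | n+1, p1, p2, p3, p4, p5, p6 =>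
    (colStep 0 p1 p2 p3 p4 p5 p6 && ext n 0 p1 p2 p3 p4 p5) ||
    (colStep 1 p1 p2 p3 p4 p5 p6 && ext n 1 p1 p2 p3 p4 p5) ||
    (colStep 2 p1 p2 p3 p4 p5 p6 && ext n 2 p1 p2 p3 p4 p5) ||
    (colStep 3 p1 p2 p3 p4 p5 p6 && ext n 3 p1 p2 p3 p4 p5) ||
    (colStep 4 p1 p2 p3 p4 p5 p6 && ext n 4 p1 p2 p3 p4 p5)

set_option maxHeartbeats 4000000 in
lemma key10 : ∀ p1 p2 p3 p4 p5 p6 : Fin 5, ext 10 p1 p2 p3 p4 p5 p6 = false := by decide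

lemma ext_succ_of {n : ℕ} {p1 p2 p3 p4 p5 p6 : Fin 5} (c : Fin 5)
    (h1 : colStep c p1 p2 p3 p4 p5 p6 = true) (h2 : ext n c p1 p2 p3 p4 p5 = true) :
    ext (n+1) p1 p2 p3 p4 p5 p6 = true := by
  fin_cases c <;> simp [ext] <;> tauto

lemma lower_bound_aux (g : ℤ → Fin 5)
    (hA : ∀ u v : ℤ, u ≠ v → g u = g v → g u = 0 → |u - v| ≠ 2 ∧ |u - v| ≠ 3)
    (hB : ∀ u v : ℤ, u ≠ v → g u = g v → g u ≠ 0 → 7 ≤ |u - v|) : False := by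
  have step : ∀ m : ℤ, colStep (g m) (g (m-1)) (g (m-2)) (g (m-3)) (g (m-4)) (g (m-5)) (g (m-6)) = true := by
    intro m
    unfold colStep
    by_cases h0 : g m = 0
    · rw [if_pos h0]
      have h2 : g (m - 2) ≠ 0 := by
        intro hc
        have h := hA m (m-2) (by omega) (by rw [h0, hc]) h0
        apply h.1
        rw [show m - (m-2) = 2 by ring]
        norm_num
      have h3 : g (m - 3) ≠ 0 := by
        intro hc
        have h := hA m (m-3) (by omega) (by rw [h0, hc]) h0
        apply h.2
        rw [show m - (m-3) = 3 by ring]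
        norm_num
      simp [h2, h3]
    · rw [if_neg h0]
      have hk : ∀ d : ℤ, 1 ≤ d → d ≤ 6 → g m ≠ g (m - d) := by
        intro d h1 h6 hc
        have := hB m (m - d) (by omega) hc h0
        have habs : |m - (m - d)| = d := by
          rw [show m - (m - d) = d by ring]
          exact abs_of_nonneg (by omega)
        omega
      have e1 := hk 1 (by norm_num) (by norm_num)
      have e2 := hk 2 (by norm_num) (by norm_num)
      have e3 := hk 3 (by norm_num) (by norm_num)
      have e4 := hk 4 (by norm_num) (by norm_num)
      have e5 := hk 5 (by norm_num) (by norm_num)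
      have e6 := hk 6 (by norm_num) (by norm_num)
      simp [bne_iff_ne, e1, e2, e3, e4, e5, e6]
  have main : ∀ (n : ℕ) (m : ℤ),
      ext n (g (m-1)) (g (m-2)) (g (m-3)) (g (m-4)) (g (m-5)) (g (m-6)) = true := by
    intro n
    induction n with
    | zero => intro m; rfl
    | succ k ih =>
      intro m
      refine ext_succ_of (g m) (step m) ?_
      have := ih (m + 1)
      simpa [show m + 1 - 1 = m by ring, show m + 1 - 2 = m - 1 by ring,
        show m + 1 - 3 = m - 2 by ring, show m + 1 - 4 = m - 3 by ring,
        show m + 1 - 5 = m - 4 by ring, show m + 1 - 6 = m - 5 by ring] using this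
  have := main 10 0
  rw [key10] at this
  exact absurd this (by simp)

theorem stmt6 :
    IsLeast {k : ℕ | ∃ f : ℤ → Fin k, ∀ u v : ℤ, u ≠ v → f u = f v →
      ((f u : ℕ) = 0 → ¬ (distG 3).Adj u v) ∧ (1 ≤ (f u : ℕ) → 2 < (distG 3).dist u v)} 6 := by
  constructor
  · -- membership: the periodic coloring fU works
    refine ⟨fU, ?_⟩
    intro u v hne hfv
    constructor
    · -- color 0: independence at distances 2,3
      intro h0 hadj
      have h0' : fU u = 0 := by
        apply Fin.ext
        simpa using h0
      have hv0 : fU v = 0 := by rw [← hfv]; exact h0'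
      rcases (adj_iff u v).1 hadj with ⟨_, h2 | h3⟩
      · rcases (abs_eq (by norm_num : (0:ℤ) ≤ 2)).1 h2 with h | h
        · apply fU_key0 v 2 (Or.inl rfl) hv0
          rw [show v + 2 = u by omega]
          exact h0'
        · apply fU_key0 u 2 (Or.inl rfl) h0'
          rw [show u + 2 = v by omega]
          exact hv0
      · rcases (abs_eq (by norm_num : (0:ℤ) ≤ 3)).1 h3 with h | h
        · apply fU_key0 v 3 (Or.inr rfl) hv0
          rw [show v + 3 = u by omega]
          exact h0'
        · apply fU_key0 u 3 (Or.inr rfl) h0'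
          rw [show u + 3 = v by omega]
          exact hv0
    · -- nonzero colors: distance > 2
      intro h1
      have h0 : fU u ≠ 0 := by
        intro hc
        rw [hc] at h1
        simp at h1
      have hv0 : fU v ≠ 0 := by rw [← hfv]; exact h0
      apply two_lt_dist
      by_contra hc
      push_neg at hc
      rcases le_total u v with hle | hle
      · have h6 : v - u ≤ 6 := by
          have : |u - v| = v - u := by rw [abs_sub_comm]; exact abs_of_nonneg (by omega)
          omega
        apply fU_key u (v - u) (by omega) h6 h0
        rw [show u + (v - u) = v by ring]
        exact hfv
      · have h6 : u - v ≤ 6 := by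
          have : |u - v| = u - v := abs_of_nonneg (by omega)
          omega
        apply fU_key v (u - v) (by omega) h6 hv0
        rw [show v + (u - v) = u by ring]
        exact hfv.symm
  · -- lower bound
    rintro k ⟨f, hf⟩
    by_contra hk
    push_neg at hk
    have hk5 : k ≤ 5 := by omega
    have hk0 : k ≠ 0 := by
      rintro rfl
      exact (f 0).elim0
    set g : ℤ → Fin 5 := fun z => ⟨(f z : ℕ), lt_of_lt_of_le (f z).isLt hk5⟩ with hg
    have hgiff : ∀ u v : ℤ, g u = g v ↔ f u = f v := by
      intro u v
      constructor
      · intro h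
        apply Fin.ext
        have h2 : (g u).val = (g v).val := congrArg Fin.val h
        simpa [hg] using h2
      · intro h
        apply Fin.ext
        show ((f u : ℕ)) = (f v : ℕ)
        exact congrArg Fin.val h
    apply lower_bound_aux g
    · intro u v hne hguv hg0
      have hfuv : f u = f v := (hgiff u v).1 hguv
      have hf0 : (f u : ℕ) = 0 := by exact congrArg Fin.val hg0
      have := (hf u v hne hfuv).1 hf0
      rw [adj_iff] at this
      push_neg at this
      exact this hne
    · intro u v hne hguv hg0
      have hfuv : f u = f v := (hgiff u v).1 hguv
      have hf1 : 1 ≤ (f u : ℕ) := by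
        rcases Nat.eq_zero_or_pos (f u : ℕ) with h | h
        · exfalso
          apply hg0
          apply Fin.ext
          exact h
        · exact h
      have hd := (hf u v hne hfuv).2 hf1
      by_contra hc
      push_neg at hc
      have := dist_le_two hne (by omega)
      omega
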